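/- Let T₁,…,T_m be quaternion n₁×n₂ matrices and μ a unit pure quaternion. Then every scalar entry of (F_μ ⊗ I_{n₁})·bcirc(T)·(F_μᴴ ⊗ I_{n₂}) at row (s,i), column (t,j) with block indices satisfying s ≠ t and s + t ≢ 0 (mod m) is zero; i.e., the nonzero blocks appear only on the block diagonal and at block positions (s,t) with s + t ≡ 0 (mod m). -/

import Mathlib

open Quaternion Matrix Kronecker

/-- `ω = exp(−2πμ/m)`, the quaternion exponential of `(−2π/m)·μ`. -/
noncomputable def qomega (m : ℕ) (μ : ℍ[ℝ]) : ℍ[ℝ] :=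
  NormedSpace.exp ((-(2 * Real.pi) / m : ℝ) • μ)

/-- The `m×m` discrete quaternion Fourier transform matrix,
`(F_μ)_{uv} = (1/√m)·ω^{uv}`. -/
noncomputable def qdft (m : ℕ) (μ : ℍ[ℝ]) : Matrix (Fin m) (Fin m) ℍ[ℝ] :=
  Matrix.of fun u v => ((Real.sqrt m)⁻¹ : ℝ) • (qomega m μ) ^ ((u : ℕ) * (v : ℕ))

/-- The block circulant matrix of the frontal slices `T₁, …, T_m`: its `(s,t)` block
(0-indexed) is `T_{((s−t) mod m)+1}`. -/
noncomputable def bcirc {m n₁ n₂ : ℕ} (T : Fin m → Matrix (Fin n₁) (Fin n₂) ℍ[ℝ]) :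
    Matrix (Fin m × Fin n₁) (Fin m × Fin n₂) ℍ[ℝ] :=
  Matrix.of fun p q => T (p.1 - q.1) p.2 q.2

variable {μ : ℍ[ℝ]}

lemma mu_sq (hpure : μ.re = 0) (hunit : ‖μ‖ = 1) : μ * μ = -1 := by
  have h1 : star μ = -μ := Quaternion.star_eq_neg.2 hpure
  have h2 : μ * star μ = ((normSq μ : ℝ) : ℍ[ℝ]) := Quaternion.self_mul_star μ
  have h3 : (normSq μ : ℝ) = 1 := by
    rw [Quaternion.normSq_eq_norm_mul_self, hunit]; ring
  rw [h1, mul_neg] at h2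
  have h4 : μ * μ = -(((normSq μ : ℝ)) : ℍ[ℝ]) := by rw [← h2, neg_neg]
  rw [h4, h3]; norm_num

noncomputable def qphi (hμ : μ * μ = -1) : ℂ →ₐ[ℝ] ℍ[ℝ] := Complex.liftAux μ hμ

lemma qphi_apply (hμ : μ * μ = -1) (w : ℂ) :
    qphi hμ w = ((w.re : ℝ) : ℍ[ℝ]) + w.im • μ := Complex.liftAux_apply μ hμ w

lemma qphi_cont (hμ : μ * μ = -1) : Continuous (qphi hμ) :=
  (qphi hμ).toLinearMap.continuous_of_finiteDimensional

lemma star_qphi (hμ : μ * μ = -1) (hpure : μ.re = 0) (w : ℂ) :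
    star (qphi hμ w) = qphi hμ (starRingEnd ℂ w) := by
  have h1 : star μ = -μ := Quaternion.star_eq_neg.2 hpure
  simp [qphi_apply, star_add, Quaternion.star_smul, h1, Complex.conj_re, Complex.conj_im,
    Quaternion.star_coe, neg_smul, smul_neg, sub_eq_add_neg]

lemma qphi_comm (hμ : μ * μ = -1) (w : ℂ) {x : ℍ[ℝ]} (hx : μ * x = x * μ) :
    qphi hμ w * x = x * qphi hμ w := by
  simp only [qphi_apply, add_mul, mul_add, Quaternion.coe_mul_eq_smul,
    Quaternion.mul_coe_eq_smul, smul_mul_assoc, mul_smul_comm, hx]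

lemma qphi_anticomm (hμ : μ * μ = -1) (w : ℂ) {x : ℍ[ℝ]} (hx : μ * x = -(x * μ)) :
    x * qphi hμ w = qphi hμ (starRingEnd ℂ w) * x := by
  simp only [qphi_apply, add_mul, mul_add, Quaternion.coe_mul_eq_smul,
    Quaternion.mul_coe_eq_smul, smul_mul_assoc, mul_smul_comm, Complex.conj_re,
    Complex.conj_im, neg_smul]
  rw [neg_mul, smul_mul_assoc, hx, smul_neg, neg_neg]

lemma qomega_eq (m : ℕ) (hμ : μ * μ = -1) :
    qomega m μ = qphi hμ (Complex.exp ((-(2 * Real.pi) / m : ℝ) * Complex.I)) := by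
  have h1 := NormedSpace.map_exp (qphi hμ) (qphi_cont hμ)
    (((-(2 * Real.pi) / m : ℝ)) • Complex.I)
  have h2 : qphi hμ (((-(2 * Real.pi) / m : ℝ)) • Complex.I)
      = ((-(2 * Real.pi) / m : ℝ)) • μ := by
    rw [_root_.map_smul]
    congr 1
    exact Complex.liftAux_apply_I μ hμ
  rw [h2] at h1
  rw [qomega, ← h1]
  congr 1
  rw [← Complex.real_smul]
  exact (congrFun Complex.exp_eq_exp_ℂ _).symm

lemma part_comm (hμ : μ * μ = -1) (x : ℍ[ℝ]) :
    μ * (x - μ * x * μ) = (x - μ * x * μ) * μ := by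
  have e1 : μ * (μ * x * μ) = (μ * μ) * (x * μ) := by noncomm_ring
  have e2 : (μ * x * μ) * μ = (μ * x) * (μ * μ) := by noncomm_ring
  rw [mul_sub, sub_mul, e1, e2, hμ]
  noncomm_ring

lemma part_anticomm (hμ : μ * μ = -1) (x : ℍ[ℝ]) :
    μ * (x + μ * x * μ) = -((x + μ * x * μ) * μ) := by
  have e1 : μ * (μ * x * μ) = (μ * μ) * (x * μ) := by noncomm_ring
  have e2 : (μ * x * μ) * μ = (μ * x) * (μ * μ) := by noncomm_ring
  rw [mul_add, add_mul, e1, e2, hμ]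
  noncomm_ring

lemma z_pow_m {m : ℕ} (hm : 1 ≤ m) :
    Complex.exp ((-(2 * Real.pi) / m : ℝ) * Complex.I) ^ m = 1 := by
  rw [← Complex.exp_nat_mul]
  have hm' : (m : ℂ) ≠ 0 := Nat.cast_ne_zero.2 (by omega)
  have h : (m : ℂ) * (((-(2 * Real.pi) / m : ℝ) : ℂ) * Complex.I)
      = (-1 : ℤ) * (2 * Real.pi * Complex.I) := by
    push_cast
    field_simp
  rw [h, Complex.exp_int_mul_two_pi_mul_I]

lemma z_pow_mod {m : ℕ} (hm : 1 ≤ m) (d : ℕ)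
    (h : Complex.exp ((-(2 * Real.pi) / m : ℝ) * Complex.I) ^ d = 1) : d % m = 0 := by
  rw [← Complex.exp_nat_mul, Complex.exp_eq_one_iff] at h
  obtain ⟨n, hn⟩ := h
  have hI : ((d : ℂ) * (((-(2 * Real.pi) / m : ℝ) : ℂ))) = (n : ℂ) * (2 * Real.pi) := by
    rw [show (d : ℂ) * ((((-(2 * Real.pi) / m : ℝ)) : ℂ) * Complex.I)
          = ((d : ℂ) * (((-(2 * Real.pi) / m : ℝ)) : ℂ)) * Complex.I by ring,
        show (n : ℂ) * (2 * Real.pi * Complex.I) = ((n : ℂ) * (2 * Real.pi)) * Complex.I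
          by ring] at hn
    exact mul_right_cancel₀ Complex.I_ne_zero hn
  have hR : (d : ℝ) * (-(2 * Real.pi) / m) = (n : ℝ) * (2 * Real.pi) := by
    exact_mod_cast hI
  have hm' : (m : ℝ) ≠ 0 := Nat.cast_ne_zero.2 (by omega)
  have h2π : (-(2 * Real.pi) : ℝ) ≠ 0 := by
    have := Real.pi_pos; intro h; nlinarith
  have h2 : (d : ℝ) * (-(2 * Real.pi)) = (n : ℝ) * (2 * Real.pi) * m := by
    field_simp at hR
    linear_combination (2 * Real.pi) * hR
  have h3 : (-(2 * Real.pi)) * ((d : ℝ) + n * m) = 0 := by linear_combination h2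
  have h4 : (d : ℝ) + n * m = 0 := by
    rcases mul_eq_zero.1 h3 with h | h
    · exact absurd h h2π
    · exact h
  have h5 : (d : ℤ) = m * (-n) := by
    have : (d : ℝ) = ((m * (-n) : ℤ) : ℝ) := by push_cast; linarith
    exact_mod_cast this
  have h6 : (m : ℤ) ∣ (d : ℤ) := ⟨-n, h5⟩
  have h7 : m ∣ d := Int.ofNat_dvd.mp (by exact_mod_cast h6)
  exact Nat.mod_eq_zero_of_dvd h7

lemma geom_fin (m : ℕ) (α : ℂ) (hαm : α ^ m = 1) (hα : α ≠ 1) :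
    ∑ v : Fin m, α ^ (v : ℕ) = 0 := by
  rw [Fin.sum_univ_eq_sum_range (fun n => α ^ n) m, geom_sum_eq hα, hαm, sub_self, zero_div]

/-- for quaternion frontal slices `T₁,…,T_m` and a unit pure quaternion `μ`,
every scalar entry of `(F_μ ⊗ I)·bcirc(T)·(F_μᴴ ⊗ I)` at row `(s,i)`, column `(t,j)` with
`s ≠ t` and `s + t ≢ 0 (mod m)` is zero; i.e. nonzero blocks appear only on the block
diagonal and at block positions `(s,t)` with `s + t ≡ 0 (mod m)`. -/
theorem qdft_bcirc_support (m n₁ n₂ : ℕ) (hm : 1 ≤ m) (μ : ℍ[ℝ])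
    (hpure : μ.re = 0) (hunit : ‖μ‖ = 1) (T : Fin m → Matrix (Fin n₁) (Fin n₂) ℍ[ℝ]) :
    ∀ (s t : Fin m) (i : Fin n₁) (j : Fin n₂), s ≠ t → ((s : ℕ) + (t : ℕ)) % m ≠ 0 →
      ((qdft m μ ⊗ₖ (1 : Matrix (Fin n₁) (Fin n₁) ℍ[ℝ]))
        * bcirc T
        * ((qdft m μ)ᴴ ⊗ₖ (1 : Matrix (Fin n₂) (Fin n₂) ℍ[ℝ]))) (s, i) (t, j) = 0 := by
  intro s t i j hst hmod
  haveI : NeZero m := ⟨by omega⟩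
  have hμ : μ * μ = -1 := mu_sq hpure hunit
  set c : ℝ := (Real.sqrt m)⁻¹ with hc
  set z : ℂ := Complex.exp ((-(2 * Real.pi) / m : ℝ) * Complex.I) with hzdef
  set w : ℂ := starRingEnd ℂ z with hwdef
  have hφω : qomega m μ = qphi hμ z := qomega_eq m hμ
  have hzm : z ^ m = 1 := z_pow_m hm
  have hzd : ∀ d : ℕ, z ^ d = 1 → d % m = 0 := fun d h => z_pow_mod hm d h
  have hwm : w ^ m = 1 := by rw [hwdef, ← map_pow, hzm, _root_.map_one]
  have hzw : z * w = 1 := by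
    have habs : ‖z‖ = 1 := by
      rw [hzdef, Complex.norm_exp]; simp
    rw [hwdef, Complex.mul_conj, Complex.normSq_eq_norm_sq, habs]
    norm_num
  -- entry formula
  have hent : ((qdft m μ ⊗ₖ (1 : Matrix (Fin n₁) (Fin n₁) ℍ[ℝ]))
        * bcirc T
        * ((qdft m μ)ᴴ ⊗ₖ (1 : Matrix (Fin n₂) (Fin n₂) ℍ[ℝ]))) (s, i) (t, j)
      = ∑ u : Fin m, ∑ v : Fin m,
          qdft m μ s u * T (u - v) i j * star (qdft m μ t v) := by
    simp only [Matrix.mul_apply, Matrix.kroneckerMap_apply, Matrix.conjTranspose_apply,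
      Matrix.one_apply, bcirc, Matrix.of_apply, Fintype.sum_prod_type]
    simp [Finset.sum_mul, Finset.mul_sum, mul_ite, ite_mul, mul_zero, zero_mul,
      Finset.sum_ite_eq, Finset.sum_ite_eq', mul_assoc]
    exact Finset.sum_comm
  rw [hent]
  set A : Fin m → ℍ[ℝ] := fun k => T k i j with hA
  set P : Fin m → ℍ[ℝ] := fun k => (2:ℝ)⁻¹ • (A k - μ * A k * μ) with hP
  set Q : Fin m → ℍ[ℝ] := fun k => (2:ℝ)⁻¹ • (A k + μ * A k * μ) with hQ
  have hPQ : ∀ k, A k = P k + Q k := by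
    intro k
    rw [hP, hQ]
    simp only [← smul_add]
    rw [sub_add_add_cancel, ← two_smul ℝ, smul_smul]
    norm_num
  have hPc : ∀ k, μ * P k = P k * μ := by
    intro k
    rw [hP]
    simp only [mul_smul_comm, smul_mul_assoc]
    exact congrArg _ (part_comm hμ (A k))
  have hQa : ∀ k, μ * Q k = -(Q k * μ) := by
    intro k
    rw [hQ]
    simp only [mul_smul_comm, smul_mul_assoc, ← smul_neg]
    exact congrArg _ (part_anticomm hμ (A k))
  -- rewrite each term
  have hterm : ∀ u v : Fin m, qdft m μ s u * T (u - v) i j * star (qdft m μ t v)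
      = (c * c) • (P (u - v) * qphi hμ (z ^ ((s : ℕ) * (u : ℕ)) * w ^ ((t : ℕ) * (v : ℕ)))
               + Q (u - v) * qphi hμ (w ^ ((s : ℕ) * (u : ℕ) + (t : ℕ) * (v : ℕ)))) := by
    intro u v
    have h1 : qdft m μ s u = c • qphi hμ (z ^ ((s : ℕ) * (u : ℕ))) := by
      rw [qdft]
      simp only [Matrix.of_apply]
      rw [hφω, ← map_pow]
    have h2 : star (qdft m μ t v) = c • qphi hμ (w ^ ((t : ℕ) * (v : ℕ))) := by
      rw [qdft]
      simp only [Matrix.of_apply]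
      rw [hφω, ← map_pow, Quaternion.star_smul, star_qphi hμ hpure, map_pow]
    rw [h1, h2, smul_mul_assoc, smul_mul_assoc, mul_smul_comm, smul_smul]
    congr 1
    have hTA : T (u - v) i j = P (u - v) + Q (u - v) := hPQ (u - v)
    rw [hTA, mul_add, add_mul]
    congr 1
    · rw [qphi_comm hμ _ (hPc (u - v)), mul_assoc, ← _root_.map_mul]
    · have hq : Q (u - v) * qphi hμ (w ^ ((s : ℕ) * (u : ℕ)))
          = qphi hμ (z ^ ((s : ℕ) * (u : ℕ))) * Q (u - v) := by
        rw [qphi_anticomm hμ _ (hQa (u - v)), hwdef, ← map_pow, Complex.conj_conj, map_pow]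
      rw [← hq, mul_assoc, ← _root_.map_mul, ← pow_add]
  simp only [hterm]
  -- reindex (u, v) ↦ (u - v, v)
  have hre : ∀ (f : Fin m → Fin m → Fin m → ℍ[ℝ]),
      (∑ u : Fin m, ∑ v : Fin m, f (u - v) u v) = ∑ k : Fin m, ∑ v : Fin m, f k (k + v) v := by
    intro f
    rw [Finset.sum_comm]
    have h1 : ∀ v : Fin m, (∑ u : Fin m, f (u - v) u v) = ∑ k : Fin m, f k (k + v) v := by
      intro v
      rw [← Equiv.sum_comp (Equiv.addRight v) (fun u => f (u - v) u v)]
      refine Finset.sum_congr rfl fun k _ => ?_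
      simp
    rw [Finset.sum_congr rfl fun v _ => h1 v]
    exact Finset.sum_comm
  rw [hre (fun k u v => (c * c) •
      (P k * qphi hμ (z ^ ((s : ℕ) * (u : ℕ)) * w ^ ((t : ℕ) * (v : ℕ)))
       + Q k * qphi hμ (w ^ ((s : ℕ) * (u : ℕ) + (t : ℕ) * (v : ℕ)))))]
  apply Finset.sum_eq_zero
  intro k _
  rw [← Finset.smul_sum]
  rw [Finset.sum_add_distrib, ← Finset.mul_sum, ← Finset.mul_sum, ← map_sum, ← map_sum]
  -- periodicity helpers
  have hzper : ∀ a b : ℕ, a % m = b % m → z ^ a = z ^ b := by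
    intro a b h
    rw [pow_eq_pow_mod a hzm, h, ← pow_eq_pow_mod b hzm]
  have hwper : ∀ a b : ℕ, a % m = b % m → w ^ a = w ^ b := by
    intro a b h
    rw [pow_eq_pow_mod a hwm, h, ← pow_eq_pow_mod b hwm]
  have hmod1 : ∀ v : Fin m, ((s : ℕ) * ((k + v : Fin m) : ℕ)) % m
      = ((s : ℕ) * (k : ℕ) + (s : ℕ) * (v : ℕ)) % m := by
    intro v
    conv_lhs => rw [Fin.add_def]
    rw [Nat.mul_mod, Nat.mod_mod_of_dvd _ dvd_rfl, ← Nat.mul_mod, Nat.mul_add]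
  -- first inner sum
  have hS1 : (∑ v : Fin m, z ^ ((s : ℕ) * ((k + v : Fin m) : ℕ)) * w ^ ((t : ℕ) * (v : ℕ))) = 0 := by
    have hα : z ^ (s : ℕ) * w ^ (t : ℕ) ≠ 1 := by
      intro h
      have hz1 : z ^ (s : ℕ) = z ^ (t : ℕ) := by
        have h2 : w ^ (t : ℕ) * z ^ (t : ℕ) = 1 := by
          rw [← mul_pow, mul_comm, hzw, one_pow]
        calc z ^ (s : ℕ) = z ^ (s : ℕ) * (w ^ (t : ℕ) * z ^ (t : ℕ)) := by rw [h2, mul_one]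
          _ = (z ^ (s : ℕ) * w ^ (t : ℕ)) * z ^ (t : ℕ) := by ring
          _ = z ^ (t : ℕ) := by rw [h, one_mul]
      have h3 : z ^ ((s : ℕ) + (m - (t : ℕ))) = 1 := by
        rw [pow_add, hz1, ← pow_add, show (t : ℕ) + (m - (t : ℕ)) = m from by
          have := t.isLt; omega, hzm]
      have h4 := hzd _ h3
      have hdvd := Nat.dvd_of_mod_eq_zero h4
      have hs := s.isLt; have ht := t.isLt
      have h5 : m ≤ (s : ℕ) + (m - (t : ℕ)) := Nat.le_of_dvd (by omega) hdvd
      have h6 : m ∣ ((s : ℕ) + (m - (t : ℕ)) - m) := Nat.dvd_sub hdvd dvd_rfl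
      have h8 := Nat.eq_zero_of_dvd_of_lt h6 (by omega)
      exact hst (Fin.ext (by omega))
    have hαm : (z ^ (s : ℕ) * w ^ (t : ℕ)) ^ m = 1 := by
      rw [mul_pow, ← pow_mul, mul_comm (s : ℕ) m, pow_mul, hzm, one_pow,
        ← pow_mul, mul_comm (t : ℕ) m, pow_mul, hwm, one_pow, one_mul]
    calc (∑ v : Fin m, z ^ ((s : ℕ) * ((k + v : Fin m) : ℕ)) * w ^ ((t : ℕ) * (v : ℕ)))
        = ∑ v : Fin m, z ^ ((s : ℕ) * (k : ℕ)) * (z ^ (s : ℕ) * w ^ (t : ℕ)) ^ (v : ℕ) := by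
          refine Finset.sum_congr rfl fun v _ => ?_
          rw [hzper _ _ (hmod1 v), pow_add, mul_pow, pow_mul, pow_mul]
          ring
      _ = z ^ ((s : ℕ) * (k : ℕ)) * ∑ v : Fin m, (z ^ (s : ℕ) * w ^ (t : ℕ)) ^ (v : ℕ) := by
          rw [Finset.mul_sum]
      _ = 0 := by rw [geom_fin m _ hαm hα, mul_zero]
  -- second inner sum
  have hmod2 : ∀ v : Fin m, ((s : ℕ) * ((k + v : Fin m) : ℕ) + (t : ℕ) * (v : ℕ)) % m
      = ((s : ℕ) * (k : ℕ) + ((s : ℕ) + (t : ℕ)) * (v : ℕ)) % m := by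
    intro v
    conv_lhs => rw [Fin.add_def]
    rw [Nat.add_mod, Nat.mul_mod, Nat.mod_mod_of_dvd _ dvd_rfl, ← Nat.mul_mod, ← Nat.add_mod]
    congr 1
    ring
  have hS2 : (∑ v : Fin m, w ^ ((s : ℕ) * ((k + v : Fin m) : ℕ) + (t : ℕ) * (v : ℕ))) = 0 := by
    have hβ : w ^ ((s : ℕ) + (t : ℕ)) ≠ 1 := by
      intro h
      apply hmod
      have hz1 : z ^ ((s : ℕ) + (t : ℕ)) = 1 := by
        have := congrArg (starRingEnd ℂ) h
        rw [map_pow, _root_.map_one] at this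
        rw [hwdef, Complex.conj_conj] at this
        exact this
      exact hzd _ hz1
    have hβm : (w ^ ((s : ℕ) + (t : ℕ))) ^ m = 1 := by
      rw [← pow_mul, mul_comm, pow_mul, hwm, one_pow]
    calc (∑ v : Fin m, w ^ ((s : ℕ) * ((k + v : Fin m) : ℕ) + (t : ℕ) * (v : ℕ)))
        = ∑ v : Fin m, w ^ ((s : ℕ) * (k : ℕ)) * (w ^ ((s : ℕ) + (t : ℕ))) ^ (v : ℕ) := by
          refine Finset.sum_congr rfl fun v _ => ?_
          rw [hwper _ _ (hmod2 v), pow_add, pow_mul, pow_mul]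
      _ = w ^ ((s : ℕ) * (k : ℕ)) * ∑ v : Fin m, (w ^ ((s : ℕ) + (t : ℕ))) ^ (v : ℕ) := by
          rw [Finset.mul_sum]
      _ = 0 := by rw [geom_fin m _ hβm hβ, mul_zero]
  simp [hS1, hS2]
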